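/- If M_1, M_2 ∈ M_n(ℂ) are skewsymmetric matrices and M_2 is not ℂ-colinear to M_1, then there exists a symmetric fluctuation f^T, i.e., real numbers r_j and unitaries u_j ∈ U(n), such that Σ_j r_j u_j M_1 u_jᵀ = 0 while Σ_j r_j u_j M_2 u_jᵀ ≠ 0. -/

import Mathlib

open Matrix

namespace SymFluctAux

variable {n : ℕ}

/-- sign-flip diagonal unitary -/
def Dm (n : ℕ) (p : Fin n) : Matrix (Fin n) (Fin n) ℂ :=
  Matrix.diagonal (fun i => if i = p then -1 else 1)

lemma Dm_transpose (p : Fin n) : (Dm n p)ᵀ = Dm n p := Matrix.diagonal_transpose _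

lemma Dm_star (p : Fin n) : star (Dm n p) = Dm n p := by
  ext i j
  simp only [Matrix.star_eq_conjTranspose, Dm, Matrix.diagonal_conjTranspose]
  by_cases h : i = j
  · subst h; by_cases hp : i = p <;> simp [Matrix.diagonal_apply_eq, hp]
  · simp [Matrix.diagonal_apply_ne _ h, Matrix.diagonal_apply_ne' _ (Ne.symm h ∘ Eq.symm), h]

lemma Dm_mul_Dm (p : Fin n) : Dm n p * Dm n p = 1 := by
  ext i j
  simp only [Dm, Matrix.diagonal_mul_diagonal]
  by_cases h : i = j
  · subst h; by_cases hp : i = p <;> simp [Matrix.diagonal_apply_eq, hp, Matrix.one_apply]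
  · simp [Matrix.diagonal_apply_ne _ h, Matrix.one_apply, h]

lemma Dm_mem (p : Fin n) : Dm n p ∈ Matrix.unitaryGroup (Fin n) ℂ := by
  rw [Matrix.mem_unitaryGroup_iff, Dm_star, Dm_mul_Dm]

/-- permutation matrix -/
def Pm (n : ℕ) (σ : Equiv.Perm (Fin n)) : Matrix (Fin n) (Fin n) ℂ :=
  Matrix.of fun i j => if σ j = i then 1 else 0

lemma Pm_star (σ : Equiv.Perm (Fin n)) : star (Pm n σ) = (Pm n σ)ᵀ := by
  ext i j
  simp only [Matrix.star_eq_conjTranspose, Matrix.conjTranspose_apply, Matrix.transpose_apply, Pm,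
    Matrix.of_apply]
  split <;> simp

lemma Pm_mul_transpose (σ : Equiv.Perm (Fin n)) : Pm n σ * (Pm n σ)ᵀ = 1 := by
  ext i j
  simp only [Matrix.mul_apply, Matrix.transpose_apply, Pm, Matrix.of_apply, Matrix.one_apply]
  rw [Finset.sum_eq_single (σ.symm i)]
  · by_cases h : i = j
    · simp [h]
    · have : σ (σ.symm i) ≠ j := by
        simp only [Equiv.apply_symm_apply]; exact h
      simp [this, h]
  · intro k _ hk
    have : σ k ≠ i := fun hh => hk (by rw [← hh, Equiv.symm_apply_apply])
    simp [this]
  · simp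

lemma Pm_mem (σ : Equiv.Perm (Fin n)) : Pm n σ ∈ Matrix.unitaryGroup (Fin n) ℂ := by
  rw [Matrix.mem_unitaryGroup_iff, Pm_star, Pm_mul_transpose]

lemma Pm_conj (σ : Equiv.Perm (Fin n)) (M : Matrix (Fin n) (Fin n) ℂ) (i j : Fin n) :
    (Pm n σ * M * (Pm n σ)ᵀ) i j = M (σ.symm i) (σ.symm j) := by
  simp only [Matrix.mul_apply, Matrix.transpose_apply, Pm, Matrix.of_apply]
  rw [Finset.sum_eq_single (σ.symm j)]
  · simp only [Equiv.apply_symm_apply, if_pos rfl, mul_one]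
    rw [Finset.sum_eq_single (σ.symm i)]
    · simp
    · intro k _ hk
      have : σ k ≠ i := fun hh => hk (by rw [← hh, Equiv.symm_apply_apply])
      simp [this]
    · simp
  · intro l _ hl
    have : σ l ≠ j := fun hh => hl (by rw [← hh, Equiv.symm_apply_apply])
    simp [this]
  · simp

/-- a unit complex number whose square is `w / |w|`. -/
noncomputable def us (w : ℂ) : ℂ :=
  if w = 0 then 1 else Complex.exp (Complex.log (w / (‖w‖ : ℂ)) / 2)

lemma us_mul_us (w : ℂ) : ((‖w‖ : ℝ) : ℂ) * (us w * us w) = w := by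
  rcases eq_or_ne w 0 with rfl | hw
  · simp [us]
  · rw [us, if_neg hw, ← Complex.exp_add]
    have h2 : Complex.log (w / (‖w‖ : ℂ)) / 2 + Complex.log (w / (‖w‖ : ℂ)) / 2
        = Complex.log (w / (‖w‖ : ℂ)) := by ring
    have hne : ((‖w‖ : ℝ) : ℂ) ≠ 0 := by
      simpa using norm_ne_zero_iff.mpr hw
    rw [h2, Complex.exp_log (by simp [hw, norm_ne_zero_iff.mpr hw]), mul_div_cancel₀ _ hne]

lemma abs_us (w : ℂ) : ‖us w‖ = 1 := by
  rcases eq_or_ne w 0 with rfl | hw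
  · simp [us]
  · rw [us, if_neg hw, Complex.norm_exp]
    have h1 : ‖w / (‖w‖ : ℂ)‖ = 1 := by
      simp [norm_ne_zero_iff.mpr hw]
    have : (Complex.log (w / (‖w‖ : ℂ)) / 2).re = 0 := by
      simp [Complex.div_re, Complex.log_re, h1]
    rw [this, Real.exp_zero]

lemma smul_mem_unitary {A : Matrix (Fin n) (Fin n) ℂ}
    (hA : A ∈ Matrix.unitaryGroup (Fin n) ℂ) {ζ : ℂ} (hζ : ‖ζ‖ = 1) :
    ζ • A ∈ Matrix.unitaryGroup (Fin n) ℂ := by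
  rw [Matrix.mem_unitaryGroup_iff] at hA ⊢
  rw [star_smul, smul_mul_smul_comm, hA]
  have h2 : (Complex.normSq ζ : ℝ) = 1 := by
    rw [Complex.normSq_eq_norm_sq, hζ]; norm_num
  rw [show (star ζ) = (starRingEnd ℂ) ζ from rfl, Complex.mul_conj, h2, Complex.ofReal_one,
    one_smul]

/-- the four-term projector combination -/
noncomputable def Q (n : ℕ) (p q : Fin n) (M : Matrix (Fin n) (Fin n) ℂ) :
    Matrix (Fin n) (Fin n) ℂ :=
  M - Dm n p * M * (Dm n p)ᵀ - Dm n q * M * (Dm n q)ᵀ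
    + (Dm n p * Dm n q) * M * (Dm n p * Dm n q)ᵀ

lemma Q_apply {p q : Fin n} (hpq : p ≠ q) (M : Matrix (Fin n) (Fin n) ℂ) (i j : Fin n) :
    Q n p q M i j
      = if i = p ∧ j = q then 4 * M p q else if i = q ∧ j = p then 4 * M q p else 0 := by
  simp only [Q, Dm, Matrix.transpose_mul, Matrix.diagonal_transpose,
    Matrix.diagonal_mul_diagonal, Matrix.sub_apply, Matrix.add_apply, Matrix.mul_diagonal,
    Matrix.diagonal_mul]
  by_cases hip : i = p <;> by_cases hiq : i = q <;> by_cases hjp : j = p <;>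
    by_cases hjq : j = q <;> simp_all <;> ring

lemma term_eq (c : ℝ) (ζ : ℂ) (A M : Matrix (Fin n) (Fin n) ℂ) :
    c • ((ζ • A) * M * (ζ • A)ᵀ) = ((c : ℂ) * ζ * ζ) • (A * M * Aᵀ) := by
  rw [Matrix.transpose_smul, smul_mul_assoc, smul_mul_assoc, mul_smul_comm, smul_smul]
  ext i j
  simp only [Matrix.smul_apply, smul_eq_mul, Complex.real_smul]
  ring

lemma conj_mul (A B M : Matrix (Fin n) (Fin n) ℂ) :
    (A * B) * M * (A * B)ᵀ = A * (B * M * Bᵀ) * Aᵀ := by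
  rw [Matrix.transpose_mul]
  simp [Matrix.mul_assoc]

end SymFluctAux

open SymFluctAux in
/-- If the skewsymmetric matrix `M₂` is not ℂ-colinear to the skewsymmetric matrix `M₁`,
there is a symmetric fluctuation annihilating `M₁` but not `M₂`. -/
theorem exists_symmetric_fluctuation_separating (n : ℕ)
    (M₁ M₂ : Matrix (Fin n) (Fin n) ℂ)
    (h₁ : M₁.transpose = -M₁) (h₂ : M₂.transpose = -M₂)
    (h : ¬ ∃ c : ℂ, M₂ = c • M₁) :
    ∃ (J : Type) (_ : Fintype J) (r : J → ℝ)
      (u : J → Matrix.unitaryGroup (Fin n) ℂ),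
      (∑ j, r j • ((u j : Matrix (Fin n) (Fin n) ℂ) * M₁ *
          ((u j : Matrix (Fin n) (Fin n) ℂ)).transpose)) = 0 ∧
      (∑ j, r j • ((u j : Matrix (Fin n) (Fin n) ℂ) * M₂ *
          ((u j : Matrix (Fin n) (Fin n) ℂ)).transpose)) ≠ 0 := by
  classical
  have skew1 : ∀ i j, M₁ j i = -M₁ i j := fun i j => by
    simpa using congrFun (congrFun h₁ i) j
  have skew2 : ∀ i j, M₂ j i = -M₂ i j := fun i j => by
    simpa using congrFun (congrFun h₂ i) j
  have diag1 : ∀ i, M₁ i i = 0 := fun i => by linear_combination (skew1 i i) / 2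
  have diag2 : ∀ i, M₂ i i = 0 := fun i => by linear_combination (skew2 i i) / 2
  by_cases hM1 : M₁ = 0
  · have hM2 : M₂ ≠ 0 := fun h0 => h ⟨0, by rw [h0, zero_smul]⟩
    refine ⟨Fin 1, inferInstance, fun _ => 1, fun _ => 1, ?_, ?_⟩
    · simp [hM1]
    · simpa using hM2
  · obtain ⟨a, b, hab⟩ : ∃ a b, M₁ a b ≠ 0 := by
      by_contra hcon; push_neg at hcon
      exact hM1 (by ext i j; simpa using hcon i j)
    have hne_ab : a ≠ b := by rintro rfl; exact hab (diag1 a)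
    obtain ⟨p, q, hpq'⟩ : ∃ p q, M₂ p q ≠ M₂ a b / M₁ a b * M₁ p q := by
      by_contra hcon; push_neg at hcon
      exact h ⟨M₂ a b / M₁ a b, by ext i j; simpa using hcon i j⟩
    have hpq_ne : p ≠ q := by
      rintro rfl; exact hpq' (by rw [diag1, diag2, mul_zero])
    have key : M₁ a b * M₂ p q - M₁ p q * M₂ a b ≠ 0 := by
      intro heq; apply hpq'
      field_simp
      linear_combination heq
    have hτb : Equiv.swap a p b ≠ p := by
      intro hh
      have h2 : Equiv.swap a p b = Equiv.swap a p a := by rw [hh, Equiv.swap_apply_left]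
      exact hne_ab ((Equiv.injective _) h2).symm
    set σ : Equiv.Perm (Fin n) :=
      (Equiv.swap a p).trans (Equiv.swap (Equiv.swap a p b) q) with hσdef
    have hσa : σ a = p := by
      simp only [hσdef, Equiv.trans_apply, Equiv.swap_apply_left]
      exact Equiv.swap_apply_of_ne_of_ne (Ne.symm hτb) hpq_ne
    have hσb : σ b = q := by
      simp only [hσdef, Equiv.trans_apply, Equiv.swap_apply_left]
    set rr : Fin 8 → ℝ :=
      ![‖M₁ a b‖/4, -(‖M₁ a b‖/4), -(‖M₁ a b‖/4),
        ‖M₁ a b‖/4, ‖-M₁ p q‖/4, -(‖-M₁ p q‖/4),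
        -(‖-M₁ p q‖/4), ‖-M₁ p q‖/4] with hrr
    set uu : Fin 8 → Matrix.unitaryGroup (Fin n) ℂ :=
      ![⟨us (M₁ a b) • 1, smul_mem_unitary (one_mem _) (abs_us _)⟩,
        ⟨us (M₁ a b) • Dm n p, smul_mem_unitary (Dm_mem p) (abs_us _)⟩,
        ⟨us (M₁ a b) • Dm n q, smul_mem_unitary (Dm_mem q) (abs_us _)⟩,
        ⟨us (M₁ a b) • (Dm n p * Dm n q),
          smul_mem_unitary (mul_mem (Dm_mem p) (Dm_mem q)) (abs_us _)⟩,
        ⟨us (-M₁ p q) • Pm n σ, smul_mem_unitary (Pm_mem σ) (abs_us _)⟩,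
        ⟨us (-M₁ p q) • (Pm n σ * Dm n a),
          smul_mem_unitary (mul_mem (Pm_mem σ) (Dm_mem a)) (abs_us _)⟩,
        ⟨us (-M₁ p q) • (Pm n σ * Dm n b),
          smul_mem_unitary (mul_mem (Pm_mem σ) (Dm_mem b)) (abs_us _)⟩,
        ⟨us (-M₁ p q) • (Pm n σ * (Dm n a * Dm n b)),
          smul_mem_unitary (mul_mem (Pm_mem σ) (mul_mem (Dm_mem a) (Dm_mem b)))
            (abs_us _)⟩] with huu
    have key_sum : ∀ M : Matrix (Fin n) (Fin n) ℂ,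
        (∑ k : Fin 8, rr k • ((uu k : Matrix (Fin n) (Fin n) ℂ) * M *
            ((uu k : Matrix (Fin n) (Fin n) ℂ)).transpose))
          = Matrix.of (fun i j =>
              if i = p ∧ j = q then M₁ a b * M p q + -M₁ p q * M a b
              else if i = q ∧ j = p then M₁ a b * M q p + -M₁ p q * M b a else 0) := by
      intro M
      have e0 : rr 0 = ‖M₁ a b‖/4 := by rw [hrr]; rfl
      have e1 : rr 1 = -(‖M₁ a b‖/4) := by rw [hrr]; rfl
      have e2 : rr 2 = -(‖M₁ a b‖/4) := by rw [hrr]; rfl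
      have e3 : rr 3 = ‖M₁ a b‖/4 := by rw [hrr]; rfl
      have e4 : rr 4 = ‖-M₁ p q‖/4 := by rw [hrr]; rfl
      have e5 : rr 5 = -(‖-M₁ p q‖/4) := by rw [hrr]; rfl
      have e6 : rr 6 = -(‖-M₁ p q‖/4) := by rw [hrr]; rfl
      have e7 : rr 7 = ‖-M₁ p q‖/4 := by rw [hrr]; rfl
      have u0 : ((uu 0 : Matrix (Fin n) (Fin n) ℂ)) = us (M₁ a b) • 1 := by rw [huu]; rfl
      have u1 : ((uu 1 : Matrix (Fin n) (Fin n) ℂ)) = us (M₁ a b) • Dm n p := by rw [huu]; rfl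
      have u2 : ((uu 2 : Matrix (Fin n) (Fin n) ℂ)) = us (M₁ a b) • Dm n q := by rw [huu]; rfl
      have u3 : ((uu 3 : Matrix (Fin n) (Fin n) ℂ))
          = us (M₁ a b) • (Dm n p * Dm n q) := by rw [huu]; rfl
      have u4 : ((uu 4 : Matrix (Fin n) (Fin n) ℂ)) = us (-M₁ p q) • Pm n σ := by rw [huu]; rfl
      have u5 : ((uu 5 : Matrix (Fin n) (Fin n) ℂ))
          = us (-M₁ p q) • (Pm n σ * Dm n a) := by rw [huu]; rfl
      have u6 : ((uu 6 : Matrix (Fin n) (Fin n) ℂ))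
          = us (-M₁ p q) • (Pm n σ * Dm n b) := by rw [huu]; rfl
      have u7 : ((uu 7 : Matrix (Fin n) (Fin n) ℂ))
          = us (-M₁ p q) • (Pm n σ * (Dm n a * Dm n b)) := by rw [huu]; rfl
      have c1 : ((‖M₁ a b‖/4 : ℝ) : ℂ) * us (M₁ a b) * us (M₁ a b)
          = M₁ a b/4 := by
        push_cast; linear_combination (us_mul_us (M₁ a b))/4
      have c1' : ((-(‖M₁ a b‖/4) : ℝ) : ℂ) * us (M₁ a b) * us (M₁ a b)
          = -(M₁ a b/4) := by
        push_cast; linear_combination -(us_mul_us (M₁ a b))/4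
      have c2 : ((‖-M₁ p q‖/4 : ℝ) : ℂ) * us (-M₁ p q) * us (-M₁ p q)
          = -M₁ p q/4 := by
        push_cast; linear_combination (us_mul_us (-M₁ p q))/4
      have c2' : ((-(‖-M₁ p q‖/4) : ℝ) : ℂ) * us (-M₁ p q) * us (-M₁ p q)
          = -(-M₁ p q/4) := by
        push_cast; linear_combination -(us_mul_us (-M₁ p q))/4
      have hQ : (M₁ a b/4) • Q n p q M + (-M₁ p q/4) • (Pm n σ * Q n a b M * (Pm n σ)ᵀ)
          = Matrix.of (fun i j =>
              if i = p ∧ j = q then M₁ a b * M p q + -M₁ p q * M a b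
              else if i = q ∧ j = p then M₁ a b * M q p + -M₁ p q * M b a else 0) := by
        ext i j
        simp only [Matrix.add_apply, Matrix.smul_apply, Pm_conj, Q_apply hpq_ne,
          Q_apply hne_ab, Matrix.of_apply, smul_eq_mul, Equiv.symm_apply_eq, hσa, hσb]
        split_ifs <;> ring
      simp only [Fin.sum_univ_eight, e0, e1, e2, e3, e4, e5, e6, e7,
        u0, u1, u2, u3, u4, u5, u6, u7]
      simp only [term_eq, c1, c1', c2, c2']
      rw [← hQ]
      simp only [Q, SymFluctAux.conj_mul, Matrix.mul_sub, Matrix.sub_mul, Matrix.mul_add, Matrix.add_mul,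
        smul_sub, smul_add, Matrix.mul_one, Matrix.one_mul, Matrix.transpose_one,
        mul_one, one_mul]
      module
    refine ⟨Fin 8, inferInstance, rr, uu, ?_, ?_⟩
    · rw [key_sum M₁]
      ext i j
      simp only [Matrix.of_apply, Matrix.zero_apply]
      split_ifs with hc1 hc2
      · ring
      · rw [skew1 p q, skew1 a b]; ring
      · rfl
    · rw [key_sum M₂]
      intro h0
      have h3 := congrFun (congrFun h0 p) q
      have h4 : M₁ a b * M₂ p q + -M₁ p q * M₂ a b = 0 := by simpa using h3
      exact key (by linear_combination h4)
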